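/- Let L be any n×n complex matrix, let Γ be a density matrix on ℂⁿ, let γ be the orthogonal projection onto the first basis vector, and set α = tr((I−γ)Γ). Then |Σ_{j≠1} (Γ_{1j}·L_{j1} + L_{1j}·Γ_{j1})| ≤ 2‖L‖√α, and likewise |Σ_{j≠1} (Γ_{1j}·L_{j1} − L_{1j}·Γ_{j1})| ≤ 2‖L‖√α. -/

import Mathlib

set_option synthInstance.maxHeartbeats 1000000
set_option maxHeartbeats 1000000


open Matrix ComplexOrder Finset

/-- The operator norm of a matrix induced by the Euclidean norm on `ℂⁿ`. -/
noncomputable def euclideanOpNorm {n : ℕ} (L : Matrix (Fin n) (Fin n) ℂ) : ℝ :=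
  ‖Matrix.toEuclideanCLM (𝕜 := ℂ) L‖

private lemma aux_norm_sq_entry {m : Type*} [Fintype m] (B : Matrix m m ℂ) (i : m) :
    ‖((WithLp.equiv 2 _).symm (fun k => B k i) : EuclideanSpace ℂ m)‖ ^ 2
      = ((Bᴴ * B) i i).re := by
  rw [EuclideanSpace.norm_eq, Real.sq_sqrt (by positivity), Matrix.mul_apply, Complex.re_sum]
  refine Finset.sum_congr rfl fun k _ => ?_
  rw [Matrix.conjTranspose_apply, Complex.star_def, ← Complex.normSq_eq_conj_mul_self,
    show ((WithLp.equiv 2 _).symm (fun k => B k i) : EuclideanSpace ℂ m) k = B k i from rfl,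
    Complex.ofReal_re, Complex.normSq_eq_norm_sq]

open scoped MatrixOrder in
private lemma aux_minor {m : Type*} [Fintype m] [DecidableEq m] {Γ : Matrix m m ℂ}
    (hΓ : Γ.PosSemidef) (i j : m) :
    ‖Γ i j‖ ^ 2 ≤ (Γ i i).re * (Γ j j).re := by
  obtain ⟨B, rfl⟩ : ∃ B : Matrix m m ℂ, Γ = Bᴴ * B := by
    obtain ⟨B, rfl⟩ := CStarAlgebra.nonneg_iff_eq_star_mul_self.mp hΓ.nonneg
    exact ⟨B, rfl⟩
  set x : EuclideanSpace ℂ m := (WithLp.equiv 2 _).symm (fun k => B k i) with hx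
  set y : EuclideanSpace ℂ m := (WithLp.equiv 2 _).symm (fun k => B k j) with hy
  have hinner : (inner ℂ x y : ℂ) = (Bᴴ * B) i j := by
    rw [Matrix.mul_apply, PiLp.inner_apply]
    refine Finset.sum_congr rfl fun k _ => ?_
    rw [Matrix.conjTranspose_apply, RCLike.inner_apply, mul_comm]
    rfl
  calc ‖(Bᴴ * B) i j‖ ^ 2 = ‖(inner ℂ x y : ℂ)‖ ^ 2 := by
        rw [hinner]
    _ ≤ (‖x‖ * ‖y‖) ^ 2 := by gcongr; exact norm_inner_le_norm x y
    _ = ((Bᴴ * B) i i).re * ((Bᴴ * B) j j).re := by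
        rw [mul_pow, aux_norm_sq_entry B i, aux_norm_sq_entry B j]

private lemma aux_coord_le {m : Type*} [Fintype m] (w : EuclideanSpace ℂ m) (j : m) :
    ‖w j‖ ≤ ‖w‖ := by
  rw [EuclideanSpace.norm_eq]
  refine (Real.le_sqrt (norm_nonneg _) (by positivity)).mpr ?_
  exact Finset.single_le_sum (f := fun i => ‖w i‖ ^ 2) (fun i _ => by positivity)
    (Finset.mem_univ j)

theorem offdiag_cross_sum_bound {n : ℕ} (L Γ : Matrix (Fin (n + 1)) (Fin (n + 1)) ℂ)
    (hΓ : Γ.PosSemidef) (hΓtr : Γ.trace = 1)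
    (α : ℝ)
    (hα : α = ((1 - Matrix.single (0 : Fin (n + 1)) 0 (1 : ℂ)) * Γ).trace.re) :
    ‖∑ j ∈ Finset.univ.filter (fun j : Fin (n + 1) => j ≠ 0),
        (Γ 0 j * L j 0 + L 0 j * Γ j 0)‖ ≤ 2 * euclideanOpNorm L * Real.sqrt α ∧
    ‖∑ j ∈ Finset.univ.filter (fun j : Fin (n + 1) => j ≠ 0),
        (Γ 0 j * L j 0 - L 0 j * Γ j 0)‖ ≤ 2 * euclideanOpNorm L * Real.sqrt α := by
  -- diagonal entries are nonnegative reals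
  have hdiag : ∀ j : Fin (n + 1), 0 ≤ (Γ j j).re ∧ (Γ j j).im = 0 := by
    intro j
    have := hΓ.diag_nonneg (i := j)
    exact ⟨(Complex.nonneg_iff.mp this).1, ((Complex.nonneg_iff.mp this).2).symm⟩
  -- α equals 1 - (Γ 0 0).re
  have hα1 : α = 1 - (Γ 0 0).re := by
    have h0 : ((Matrix.single (0 : Fin (n + 1)) 0 (1 : ℂ)) * Γ).trace = Γ 0 0 := by
      simp [Matrix.trace, Matrix.mul_apply, Matrix.single, Matrix.diag, ite_and]
    rw [hα, sub_mul, one_mul, Matrix.trace_sub, h0, hΓtr, Complex.sub_re, Complex.one_re]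
  -- trace real parts sum to one
  have htr : ∑ j : Fin (n + 1), (Γ j j).re = 1 := by
    have : Γ.trace.re = 1 := by rw [hΓtr]; simp
    rw [← this, Matrix.trace, Complex.re_sum]
    rfl
  -- α equals the off-corner diagonal sum
  have hα2 : α = ∑ j ∈ Finset.univ.filter (fun j : Fin (n + 1) => j ≠ 0), (Γ j j).re := by
    rw [hα1, ← htr, Finset.filter_ne', Finset.sum_erase_eq_sub (Finset.mem_univ 0)]
  have hαnn : 0 ≤ α := by
    rw [hα2]; exact Finset.sum_nonneg fun j _ => (hdiag j).1
  have h00le : (Γ 0 0).re ≤ 1 := by linarith [hα1]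
  -- the vector
  set vf : Fin (n + 1) → ℂ := fun j => if j = 0 then 0 else Γ j 0 with hvf
  set v : EuclideanSpace ℂ (Fin (n + 1)) := (WithLp.equiv 2 _).symm vf with hv
  have hvj : ∀ j, v j = vf j := fun j => rfl
  -- norm of v
  have hvnorm : ‖v‖ ≤ Real.sqrt α := by
    rw [EuclideanSpace.norm_eq]
    refine Real.sqrt_le_sqrt ?_
    rw [hα2]
    have : ∀ j : Fin (n + 1), ‖v j‖ ^ 2 ≤ (if j = 0 then 0 else (Γ j j).re) := by
      intro j
      by_cases hj : j = 0
      · rw [hvj, hvf]; simp [hj]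
      · have h1 : v j = Γ j 0 := by rw [hvj, hvf]; simp [hj]
        have h2 := aux_minor hΓ j 0
        rw [if_neg hj, h1]
        calc ‖Γ j 0‖ ^ 2 ≤ (Γ j j).re * (Γ 0 0).re := h2
          _ ≤ (Γ j j).re * 1 := by
              exact mul_le_mul_of_nonneg_left h00le (hdiag j).1
          _ = (Γ j j).re := mul_one _
    calc ∑ i, ‖v i‖ ^ 2 ≤ ∑ i, (if i = 0 then 0 else (Γ i i).re) :=
          Finset.sum_le_sum fun i _ => this i
      _ = ∑ j ∈ Finset.univ.filter (fun j : Fin (n + 1) => j ≠ 0), (Γ j j).re := by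
          rw [Finset.sum_filter]
          exact Finset.sum_congr rfl fun i _ => by by_cases hi : i = 0 <;> simp [hi]
  -- operator norm facts
  have hLnn : 0 ≤ euclideanOpNorm L := norm_nonneg _
  have hstarnorm : ‖Matrix.toEuclideanCLM (𝕜 := ℂ) (star L)‖ = euclideanOpNorm L := by
    rw [map_star, ContinuousLinearMap.star_eq_adjoint]
    exact LinearIsometryEquiv.norm_map ContinuousLinearMap.adjoint _
  -- bound for the B-sum
  have hB : ∑ j ∈ Finset.univ.filter (fun j : Fin (n + 1) => j ≠ 0), L 0 j * Γ j 0
      = (Matrix.toEuclideanCLM (𝕜 := ℂ) L v) 0 := by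
    have : (Matrix.toEuclideanCLM (𝕜 := ℂ) L v) 0 = (L.mulVec vf) 0 := rfl
    rw [this, Matrix.mulVec, dotProduct, Finset.sum_filter]
    exact Finset.sum_congr rfl fun j _ => by by_cases hj : j = 0 <;> simp [hvf, hj]
  have hBle : ‖∑ j ∈ Finset.univ.filter (fun j : Fin (n + 1) => j ≠ 0),
      L 0 j * Γ j 0‖ ≤ euclideanOpNorm L * Real.sqrt α := by
    rw [hB]
    calc ‖(Matrix.toEuclideanCLM (𝕜 := ℂ) L v) 0‖ ≤ ‖Matrix.toEuclideanCLM (𝕜 := ℂ) L v‖ :=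
          aux_coord_le _ 0
      _ ≤ ‖Matrix.toEuclideanCLM (𝕜 := ℂ) L‖ * ‖v‖ := ContinuousLinearMap.le_opNorm _ _
      _ ≤ euclideanOpNorm L * Real.sqrt α := by
          exact mul_le_mul_of_nonneg_left hvnorm hLnn
  -- bound for the A-sum
  have hA : ∑ j ∈ Finset.univ.filter (fun j : Fin (n + 1) => j ≠ 0), Γ 0 j * L j 0
      = (starRingEnd ℂ) ((Matrix.toEuclideanCLM (𝕜 := ℂ) (star L) v) 0) := by
    have : (Matrix.toEuclideanCLM (𝕜 := ℂ) (star L) v) 0 = ((star L).mulVec vf) 0 := rfl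
    rw [this, Matrix.mulVec, dotProduct, map_sum, Finset.sum_filter]
    refine Finset.sum_congr rfl fun j _ => ?_
    by_cases hj : j = 0
    · simp [hvf, hj]
    · have hherm : Γ 0 j = (starRingEnd ℂ) (Γ j 0) := by
        have := hΓ.isHermitian.apply 0 j
        rw [← this]; rfl
      rw [if_pos hj, hherm]
      simp [hvf, hj, Matrix.star_apply, _root_.map_mul, mul_comm]
  have hAle : ‖∑ j ∈ Finset.univ.filter (fun j : Fin (n + 1) => j ≠ 0),
      Γ 0 j * L j 0‖ ≤ euclideanOpNorm L * Real.sqrt α := by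
    rw [hA, RCLike.norm_conj]
    calc ‖(Matrix.toEuclideanCLM (𝕜 := ℂ) (star L) v) 0‖
        ≤ ‖Matrix.toEuclideanCLM (𝕜 := ℂ) (star L) v‖ := aux_coord_le _ 0
      _ ≤ ‖Matrix.toEuclideanCLM (𝕜 := ℂ) (star L)‖ * ‖v‖ := ContinuousLinearMap.le_opNorm _ _
      _ ≤ euclideanOpNorm L * Real.sqrt α := by
          rw [hstarnorm]
          exact mul_le_mul_of_nonneg_left hvnorm hLnn
  constructor
  · rw [Finset.sum_add_distrib]
    calc ‖_ + _‖ ≤ ‖_‖ + ‖_‖ := norm_add_le _ _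
      _ ≤ euclideanOpNorm L * Real.sqrt α + euclideanOpNorm L * Real.sqrt α :=
          add_le_add hAle hBle
      _ = 2 * euclideanOpNorm L * Real.sqrt α := by ring
  · rw [Finset.sum_sub_distrib]
    calc ‖_ - _‖ ≤ ‖_‖ + ‖_‖ := norm_sub_le _ _
      _ ≤ euclideanOpNorm L * Real.sqrt α + euclideanOpNorm L * Real.sqrt α :=
          add_le_add hAle hBle
      _ = 2 * euclideanOpNorm L * Real.sqrt α := by ring
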